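/- Let T : (ℝ^n)^3 → ℝ be a trilinear form symmetric under all permutations of its arguments. Then there exists a unit vector v such that T(v,v,v) = sup over unit vectors e1,e2,e3 of T(e1,e2,e3), and this supremum is nonnegative. -/

import Mathlib

open scoped RealInnerProductSpace

section aux

variable {n : ℕ}

local notation "E" => EuclideanSpace ℝ (Fin n)

-- Key lemma: if (a,b,c) maximizes T among unit triples and additionally maximizes the
-- sum of pairwise inner products among such maximizers, and a ≠ b, then b = -a and c = a.
set_option maxHeartbeats 1000000 in
lemma key_lemma (T : E →ₗ[ℝ] E →ₗ[ℝ] E →ₗ[ℝ] ℝ)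
    (hsym1 : ∀ x y z, T x y z = T y x z) (M : ℝ)
    (hub : ∀ e₁ e₂ e₃ : E, ‖e₁‖ = 1 → ‖e₂‖ = 1 → ‖e₃‖ = 1 → T e₁ e₂ e₃ ≤ M)
    (a b c : E) (ha : ‖a‖ = 1) (hb : ‖b‖ = 1) (hc : ‖c‖ = 1)
    (hM : T a b c = M)
    (hmax : ∀ a' b' c' : E, ‖a'‖ = 1 → ‖b'‖ = 1 → ‖c'‖ = 1 → T a' b' c' = M →
      ⟪a', b'⟫ + ⟪b', c'⟫ + ⟪a', c'⟫ ≤ ⟪a, b⟫ + ⟪b, c⟫ + ⟪a, c⟫)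
    (hab : a ≠ b) : b = -a ∧ c = a := by
  by_cases hab' : b = -a
  · subst hab'
    constructor
    · rfl
    have hM' : T a a (-c) = M := by
      have h1 : T a (-a) c = -(T a a c) := by simp
      have h2 : T a a (-c) = -(T a a c) := by simp
      rw [h2, ← h1, hM]
    have hmax' := hmax a a (-c) ha ha (by simpa using hc) hM'
    have haa : ⟪a, a⟫ = 1 := by rw [real_inner_self_eq_norm_sq, ha]; norm_num
    simp only [inner_neg_right, inner_neg_left] at hmax'
    rw [haa] at hmax'
    -- hmax' : 1 + -⟪a,c⟫ + -⟪a,c⟫ ≤ -1 + -⟪a,c⟫ + ⟪a,c⟫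
    have hac : (1:ℝ) ≤ ⟪a, c⟫ := by linarith
    have : ‖a - c‖ ^ 2 ≤ 0 := by
      rw [norm_sub_sq_real, ha, hc]; nlinarith
    have : a - c = 0 := by
      have := sq_nonneg ‖a - c‖
      have h0 : ‖a - c‖ ^ 2 = 0 := le_antisymm ‹_› ‹_›
      have : ‖a - c‖ = 0 := by nlinarith
      simpa [norm_eq_zero] using this
    exact (sub_eq_zero.mp this).symm
  · exfalso
    have hab0 : a + b ≠ 0 := by
      intro h
      exact hab' (eq_neg_of_add_eq_zero_right h)
    have hab1 : a - b ≠ 0 := sub_ne_zero.mpr hab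
    set r : ℝ := ‖a + b‖ with hr_def
    set t : ℝ := ‖a - b‖ with ht_def
    have hr : 0 < r := norm_pos_iff.mpr hab0
    have ht : 0 < t := norm_pos_iff.mpr hab1
    set u : E := r⁻¹ • (a + b) with hu_def
    set w : E := t⁻¹ • (a - b) with hw_def
    have hu : ‖u‖ = 1 := by
      rw [hu_def, norm_smul, norm_inv, norm_norm, ← hr_def, inv_mul_cancel₀ hr.ne']
    have hw : ‖w‖ = 1 := by
      rw [hw_def, norm_smul, norm_inv, norm_norm, ← ht_def, inv_mul_cancel₀ ht.ne']
    have hru : a + b = r • u := by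
      rw [hu_def, smul_inv_smul₀ hr.ne']
    have htw : a - b = t • w := by
      rw [hw_def, smul_inv_smul₀ ht.ne']
    set X : ℝ := T u u c with hX_def
    set Y : ℝ := T w w c with hY_def
    have hpol : r ^ 2 * X - t ^ 2 * Y = 4 * M := by
      have e1 : T (a + b) (a + b) c = r ^ 2 * X := by
        rw [hru]; simp [hX_def]; ring
      have e2 : T (a - b) (a - b) c = t ^ 2 * Y := by
        rw [htw]; simp [hY_def]; ring
      have e3 : T (a + b) (a + b) c - T (a - b) (a - b) c = 4 * T a b c := by
        simp only [map_add, map_sub, LinearMap.add_apply, LinearMap.sub_apply]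
        linarith [hsym1 b a c]
      rw [← e1, ← e2, e3, hM]
    have hpar : r ^ 2 + t ^ 2 = 4 := by
      rw [hr_def, ht_def, norm_add_sq_real, norm_sub_sq_real, ha, hb]; ring
    have hXle : X ≤ M := hub u u c hu hu hc
    have hYge : -M ≤ Y := by
      have := hub w w (-c) hw hw (by simpa using hc)
      have h2 : T w w (-c) = -Y := by simp [hY_def]
      rw [h2] at this
      linarith
    have hXM : X = M := by
      have hA : t ^ 2 * (-M) ≤ t ^ 2 * Y := mul_le_mul_of_nonneg_left hYge (sq_nonneg t)
      have h4 : r ^ 2 * M + t ^ 2 * M = 4 * M := by linear_combination M * hpar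
      have hB : r ^ 2 * M ≤ r ^ 2 * X := by linarith
      have hMX : M ≤ X := le_of_mul_le_mul_left hB (by positivity)
      linarith
    -- now use maximality of the inner-product sum
    have hmax' := hmax u u c hu hu hc hXM
    have huu : ⟪u, u⟫ = 1 := by rw [real_inner_self_eq_norm_sq, hu]; norm_num
    set q : ℝ := ⟪a, c⟫ + ⟪b, c⟫ with hq_def
    have huc : ⟪u, c⟫ = r⁻¹ * q := by
      rw [hu_def, real_inner_smul_left, inner_add_left, hq_def]
    have hqabs : |q| ≤ r := by
      have := abs_real_inner_le_norm (a + b) c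
      rw [inner_add_left, hc, mul_one] at this
      simpa [hq_def, hr_def] using this
    have hip : ⟪a, b⟫ = r ^ 2 / 2 - 1 := by
      have := norm_add_sq_real a b
      rw [ha, hb, ← hr_def] at this
      linarith
    have hrlt : r < 2 := by
      have h1 : (0:ℝ) < t ^ 2 := by positivity
      nlinarith
    rw [huu, huc, hip] at hmax'
    -- hmax' : 1 + r⁻¹*q + r⁻¹*q ≤ (r^2/2 - 1) + ⟪b,c⟫ + ⟪a,c⟫
    have hbc : ⟪b, c⟫ + ⟪a, c⟫ = q := by rw [hq_def]; ring
    have hineq : r + 2 * q ≤ r * (r ^ 2 / 2 - 1 + q) := by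
      have h1 : r * (1 + r⁻¹ * q + r⁻¹ * q) = r + 2 * q := by
        field_simp; ring
      have h2 : r * (1 + r⁻¹ * q + r⁻¹ * q) ≤ r * (r ^ 2 / 2 - 1 + q) := by
        apply mul_le_mul_of_nonneg_left _ hr.le
        linarith
      linarith
    have hq1 : -r ≤ q := neg_le_of_abs_le hqabs
    nlinarith [mul_nonneg (sub_nonneg.mpr hrlt.le) (by linarith : (0:ℝ) ≤ q + r),
      mul_pos (mul_pos hr hr) (sub_pos.mpr hrlt)]

end aux

set_option maxHeartbeats 1000000 in
theorem stmt_0 (n : ℕ) (hn : 1 ≤ n)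
    (T : EuclideanSpace ℝ (Fin n) →ₗ[ℝ] EuclideanSpace ℝ (Fin n) →ₗ[ℝ]
      EuclideanSpace ℝ (Fin n) →ₗ[ℝ] ℝ)
    (hsym1 : ∀ x y z, T x y z = T y x z)
    (hsym2 : ∀ x y z, T x y z = T x z y) :
    ∃ v : EuclideanSpace ℝ (Fin n), ‖v‖ = 1 ∧
      T v v v = sSup {r : ℝ | ∃ e₁ e₂ e₃ : EuclideanSpace ℝ (Fin n),
        ‖e₁‖ = 1 ∧ ‖e₂‖ = 1 ∧ ‖e₃‖ = 1 ∧ r = T e₁ e₂ e₃} ∧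
      0 ≤ T v v v := by
  set E := EuclideanSpace ℝ (Fin n)
  -- continuity of the trilinear map
  let T1 : E →ₗ[ℝ] E →ₗ[ℝ] (E →L[ℝ] ℝ) :=
    { toFun := fun x =>
        { toFun := fun y => LinearMap.toContinuousLinearMap (T x y)
          map_add' := by intros; simp
          map_smul' := by intros; simp }
      map_add' := by intros; ext; simp
      map_smul' := by intros; ext; simp }
  let T2 : E →ₗ[ℝ] (E →L[ℝ] (E →L[ℝ] ℝ)) :=
    { toFun := fun x => LinearMap.toContinuousLinearMap (T1 x)
      map_add' := by intros; ext; simp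
      map_smul' := by intros; ext; simp }
  let T' : E →L[ℝ] (E →L[ℝ] (E →L[ℝ] ℝ)) :=
    LinearMap.toContinuousLinearMap (F' := E →L[ℝ] (E →L[ℝ] ℝ)) T2
  have hT' : ∀ x y z : E, T' x y z = T x y z := by intros; rfl
  have hF : Continuous fun p : E × E × E => T p.1 p.2.1 p.2.2 := by
    have c1 : Continuous fun p : E × E × E => T' p.1 :=
      T'.continuous.comp continuous_fst
    have c2 : Continuous fun p : E × E × E => T' p.1 p.2.1 :=
      isBoundedBilinearMap_apply.continuous.comp
        (c1.prodMk (continuous_fst.comp continuous_snd))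
    have c3 : Continuous fun p : E × E × E => T' p.1 p.2.1 p.2.2 :=
      isBoundedBilinearMap_apply.continuous.comp
        (c2.prodMk (continuous_snd.comp continuous_snd))
    simpa only [hT'] using c3
  set S : Set ℝ := {r : ℝ | ∃ e₁ e₂ e₃ : E,
      ‖e₁‖ = 1 ∧ ‖e₂‖ = 1 ∧ ‖e₃‖ = 1 ∧ r = T e₁ e₂ e₃} with hS_def
  -- some unit vector exists
  set e0 : E := EuclideanSpace.single (⟨0, hn⟩ : Fin n) (1:ℝ) with he0_def
  have he0 : ‖e0‖ = 1 := by rw [he0_def, EuclideanSpace.norm_single]; norm_num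
  have hSne : S.Nonempty := ⟨T e0 e0 e0, e0, e0, e0, he0, he0, he0, rfl⟩
  -- S is the image of a compact set
  have hSim : S = (fun p : E × E × E => T p.1 p.2.1 p.2.2) ''
      (Metric.sphere (0:E) 1 ×ˢ (Metric.sphere (0:E) 1 ×ˢ Metric.sphere (0:E) 1)) := by
    ext x
    constructor
    · rintro ⟨e₁, e₂, e₃, h1, h2, h3, rfl⟩
      exact ⟨(e₁, e₂, e₃), by simp [Set.mem_prod, mem_sphere_zero_iff_norm, h1, h2, h3], rfl⟩
    · rintro ⟨⟨p1, p2, p3⟩, hp, rfl⟩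
      simp only [Set.mem_prod, mem_sphere_zero_iff_norm] at hp
      exact ⟨p1, p2, p3, hp.1, hp.2.1, hp.2.2, rfl⟩
  have hScomp : IsCompact S := by
    rw [hSim]
    exact (((isCompact_sphere (0:E) 1).prod
      ((isCompact_sphere (0:E) 1).prod (isCompact_sphere (0:E) 1))).image hF)
  set M : ℝ := sSup S with hM_def
  have hub : ∀ e₁ e₂ e₃ : E, ‖e₁‖ = 1 → ‖e₂‖ = 1 → ‖e₃‖ = 1 → T e₁ e₂ e₃ ≤ M :=
    fun e₁ e₂ e₃ h1 h2 h3 => le_csSup hScomp.bddAbove ⟨e₁, e₂, e₃, h1, h2, h3, rfl⟩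
  have hM0 : 0 ≤ M := by
    have h1 := hub e0 e0 e0 he0 he0 he0
    have h2 := hub e0 e0 (-e0) he0 he0 (by simpa using he0)
    have h3 : T e0 e0 (-e0) = -(T e0 e0 e0) := by simp
    rw [h3] at h2
    linarith
  -- the set of maximizing triples
  set K : Set (E × E × E) := {p | (‖p.1‖ = 1 ∧ ‖p.2.1‖ = 1 ∧ ‖p.2.2‖ = 1) ∧
      T p.1 p.2.1 p.2.2 = M} with hK_def
  have hKcomp : IsCompact K := by
    have : K = (Metric.sphere (0:E) 1 ×ˢ (Metric.sphere (0:E) 1 ×ˢ Metric.sphere (0:E) 1)) ∩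
        (fun p : E × E × E => T p.1 p.2.1 p.2.2) ⁻¹' {M} := by
      ext p
      simp [hK_def, Set.mem_prod, mem_sphere_zero_iff_norm, and_assoc]
    rw [this]
    exact (((isCompact_sphere (0:E) 1).prod
      ((isCompact_sphere (0:E) 1).prod (isCompact_sphere (0:E) 1))).inter_right
      (isClosed_singleton.preimage hF))
  have hKne : K.Nonempty := by
    have hMS : M ∈ S := hScomp.sSup_mem hSne
    obtain ⟨e₁, e₂, e₃, h1, h2, h3, he⟩ := hMS
    exact ⟨(e₁, e₂, e₃), ⟨⟨h1, h2, h3⟩, he.symm⟩⟩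
  -- maximize the inner product sum on K
  have hhc : Continuous fun p : E × E × E =>
      ⟪p.1, p.2.1⟫ + ⟪p.2.1, p.2.2⟫ + ⟪p.1, p.2.2⟫ := by
    have c1 : Continuous fun p : E × E × E => ⟪p.1, p.2.1⟫ :=
      continuous_inner.comp (continuous_fst.prodMk (continuous_fst.comp continuous_snd))
    have c2 : Continuous fun p : E × E × E => ⟪p.2.1, p.2.2⟫ :=
      continuous_inner.comp
        ((continuous_fst.comp continuous_snd).prodMk (continuous_snd.comp continuous_snd))
    have c3 : Continuous fun p : E × E × E => ⟪p.1, p.2.2⟫ :=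
      continuous_inner.comp (continuous_fst.prodMk (continuous_snd.comp continuous_snd))
    exact (c1.add c2).add c3
  obtain ⟨⟨a, b, c⟩, hmem, hmaxOn⟩ := hKcomp.exists_isMaxOn hKne hhc.continuousOn
  obtain ⟨⟨ha, hb, hc⟩, habcM⟩ := hmem
  simp only at ha hb hc habcM
  have hmax : ∀ a' b' c' : E, ‖a'‖ = 1 → ‖b'‖ = 1 → ‖c'‖ = 1 → T a' b' c' = M →
      ⟪a', b'⟫ + ⟪b', c'⟫ + ⟪a', c'⟫ ≤ ⟪a, b⟫ + ⟪b, c⟫ + ⟪a, c⟫ := by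
    intro a' b' c' h1 h2 h3 h4
    exact hmaxOn (⟨⟨h1, h2, h3⟩, h4⟩ : (a', b', c') ∈ K)
  -- produce the diagonal maximizer
  have key : ∃ v : E, ‖v‖ = 1 ∧ T v v v = M := by
    by_cases h1 : a = b
    · by_cases h2 : b = c
      · refine ⟨a, ha, ?_⟩
        rw [← h1, show c = a from h2.symm.trans h1.symm] at habcM
        exact habcM
      · -- apply the key lemma to the triple (b, c, a)
        have hperm : T b c a = M := by
          rw [← hsym2 b a c, ← hsym1 a b c]; exact habcM
        have hmax' : ∀ a' b' c' : E, ‖a'‖ = 1 → ‖b'‖ = 1 → ‖c'‖ = 1 → T a' b' c' = M →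
            ⟪a', b'⟫ + ⟪b', c'⟫ + ⟪a', c'⟫ ≤ ⟪b, c⟫ + ⟪c, a⟫ + ⟪b, a⟫ := by
          intro a' b' c' g1 g2 g3 g4
          have := hmax a' b' c' g1 g2 g3 g4
          rw [real_inner_comm c a, real_inner_comm b a] at this
          linarith
        obtain ⟨hcb, hab2⟩ := key_lemma T hsym1 M hub b c a hb hc ha hperm hmax' h2
        -- hcb : c = -b, hab2 : a = b
        subst h1
        refine ⟨-a, by simpa using ha, ?_⟩
        have : T a a c = M := habcM
        rw [hcb] at this
        have h3 : T a a (-a) = -(T a a a) := by simp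
        have h4 : T (-a) (-a) (-a) = -(T a a a) := by simp
        rw [h4, ← h3, this]
    · obtain ⟨hba, hca⟩ := key_lemma T hsym1 M hub a b c ha hb hc habcM hmax h1
      refine ⟨-a, by simpa using ha, ?_⟩
      have : T a (-a) a = M := by rw [hba, hca] at habcM; exact habcM
      have h3 : T a (-a) a = -(T a a a) := by simp
      have h4 : T (-a) (-a) (-a) = -(T a a a) := by simp
      rw [h4, ← h3, this]
  obtain ⟨v, hv, hvM⟩ := key
  exact ⟨v, hv, hvM, hvM ▸ hM0⟩
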